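/- arXiv:2605.29373 — 2 statements merged into one kernel-verified Lean document; each statement's English description precedes it below -/
import Mathlib

section
/- Let s, t : ℝ^{k₁} → ℝ^{k₂} be differentiable functions and let T : ℝ^{k₁} × ℝ^{k₂} → ℝ^{k₁} × ℝ^{k₂} be the affine coupling map T(a, b) = ( a, b ⊙ exp(s(a)) + t(a) ), with exp and ⊙ componentwise. Then T is differentiable at every (a, b), and the determinant of its derivative equals exp( Σ_{j=1}^{k₂} s_j(a) ); in particular det DT(a, b) > 0 and log |det DT(a, b)| = Σ_{j=1}^{k₂} s_j(a). -/
open Real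

/-- The affine coupling map `T(a, b) = (a, b ⊙ exp(s(a)) + t(a))` with
differentiable `s`, `t` is differentiable everywhere, and the determinant of its
derivative equals `exp(Σ_j s_j(a))`; in particular it is positive and its log
absolute value is `Σ_j s_j(a)`. -/
theorem affine_coupling_jacobian {k₁ k₂ : ℕ}
    (s t : (Fin k₁ → ℝ) → (Fin k₂ → ℝ))
    (hs : Differentiable ℝ s) (ht : Differentiable ℝ t)
    (T : (Fin k₁ → ℝ) × (Fin k₂ → ℝ) → (Fin k₁ → ℝ) × (Fin k₂ → ℝ))
    (hT : ∀ a b, T (a, b) = (a, fun j => b j * Real.exp (s a j) + t a j)) :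
    ∀ (a : Fin k₁ → ℝ) (b : Fin k₂ → ℝ),
      DifferentiableAt ℝ T (a, b) ∧
      (fderiv ℝ T (a, b)).det = Real.exp (∑ j, s a j) ∧
      0 < (fderiv ℝ T (a, b)).det ∧
      Real.log |(fderiv ℝ T (a, b)).det| = ∑ j, s a j := by
  classical
  intro a b
  have hTfun : T = fun p => (p.1, fun j => p.2 j * Real.exp (s p.1 j) + t p.1 j) := by
    funext p
    obtain ⟨x, y⟩ := p
    exact hT x y
  -- the candidate derivative, coordinate by coordinate in the second factor
  let c : Fin k₂ → (((Fin k₁ → ℝ) × (Fin k₂ → ℝ)) →L[ℝ] ℝ) := fun j =>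
    b j • (Real.exp (s a j) •
        ((ContinuousLinearMap.proj j).comp
          ((fderiv ℝ s a).comp (ContinuousLinearMap.fst ℝ (Fin k₁ → ℝ) (Fin k₂ → ℝ)))))
      + Real.exp (s a j) •
        ((ContinuousLinearMap.proj j).comp (ContinuousLinearMap.snd ℝ (Fin k₁ → ℝ) (Fin k₂ → ℝ)))
      + (ContinuousLinearMap.proj j).comp
          ((fderiv ℝ t a).comp (ContinuousLinearMap.fst ℝ (Fin k₁ → ℝ) (Fin k₂ → ℝ)))
  let L : ((Fin k₁ → ℝ) × (Fin k₂ → ℝ)) →L[ℝ] ((Fin k₁ → ℝ) × (Fin k₂ → ℝ)) :=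
    (ContinuousLinearMap.fst ℝ (Fin k₁ → ℝ) (Fin k₂ → ℝ)).prod (ContinuousLinearMap.pi c)
  have hsfst : HasFDerivAt (fun p : (Fin k₁ → ℝ) × (Fin k₂ → ℝ) => s p.1)
      ((fderiv ℝ s a).comp (ContinuousLinearMap.fst ℝ (Fin k₁ → ℝ) (Fin k₂ → ℝ))) (a, b) :=
    (hs a).hasFDerivAt.comp (a, b) (hasFDerivAt_fst)
  have htfst : HasFDerivAt (fun p : (Fin k₁ → ℝ) × (Fin k₂ → ℝ) => t p.1)
      ((fderiv ℝ t a).comp (ContinuousLinearMap.fst ℝ (Fin k₁ → ℝ) (Fin k₂ → ℝ))) (a, b) :=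
    (ht a).hasFDerivAt.comp (a, b) (hasFDerivAt_fst)
  have hcoord : ∀ j, HasFDerivAt (fun p : (Fin k₁ → ℝ) × (Fin k₂ → ℝ) => p.2 j * Real.exp (s p.1 j) + t p.1 j)
      (c j) (a, b) := by
    intro j
    have h1 : HasFDerivAt (fun p : (Fin k₁ → ℝ) × (Fin k₂ → ℝ) => p.2 j)
        ((ContinuousLinearMap.proj j).comp
          (ContinuousLinearMap.snd ℝ (Fin k₁ → ℝ) (Fin k₂ → ℝ))) (a, b) :=
      ((ContinuousLinearMap.proj (R := ℝ) (φ := fun _ : Fin k₂ => ℝ) j).comp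
        (ContinuousLinearMap.snd ℝ (Fin k₁ → ℝ) (Fin k₂ → ℝ))).hasFDerivAt
    have h2 : HasFDerivAt (fun p : (Fin k₁ → ℝ) × (Fin k₂ → ℝ) => s p.1 j)
        ((ContinuousLinearMap.proj j).comp
          ((fderiv ℝ s a).comp (ContinuousLinearMap.fst ℝ (Fin k₁ → ℝ) (Fin k₂ → ℝ)))) (a, b) := by
      have := hasFDerivAt_pi'.mp hsfst j
      exact this
    have h3 : HasFDerivAt (fun p : (Fin k₁ → ℝ) × (Fin k₂ → ℝ) => Real.exp (s p.1 j))
        (Real.exp (s a j) • ((ContinuousLinearMap.proj j).comp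
          ((fderiv ℝ s a).comp (ContinuousLinearMap.fst ℝ (Fin k₁ → ℝ) (Fin k₂ → ℝ))))) (a, b) :=
      h2.exp
    have h4 : HasFDerivAt (fun p : (Fin k₁ → ℝ) × (Fin k₂ → ℝ) => t p.1 j)
        ((ContinuousLinearMap.proj j).comp
          ((fderiv ℝ t a).comp (ContinuousLinearMap.fst ℝ (Fin k₁ → ℝ) (Fin k₂ → ℝ)))) (a, b) := by
      exact hasFDerivAt_pi'.mp htfst j
    exact (h1.mul h3).add h4
  have hL : HasFDerivAt T L (a, b) := by
    rw [hTfun]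
    apply HasFDerivAt.prodMk (hasFDerivAt_fst)
    apply hasFDerivAt_pi'.mpr
    intro j
    simpa [ContinuousLinearMap.proj_pi] using hcoord j
  have hdiff : DifferentiableAt ℝ T (a, b) := hL.differentiableAt
  have hfd : fderiv ℝ T (a, b) = L := hL.fderiv
  -- compute the determinant via the matrix in the product of standard bases
  have hdet : (fderiv ℝ T (a, b)).det = Real.exp (∑ j, s a j) := by
    rw [hfd]
    show LinearMap.det (L : ((Fin k₁ → ℝ) × (Fin k₂ → ℝ)) →ₗ[ℝ] ((Fin k₁ → ℝ) × (Fin k₂ → ℝ))) = Real.exp (∑ j, s a j)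
    set B := (Pi.basisFun ℝ (Fin k₁)).prod (Pi.basisFun ℝ (Fin k₂)) with hB
    rw [← LinearMap.det_toMatrix B]
    have hmat : LinearMap.toMatrix B B (L : ((Fin k₁ → ℝ) × (Fin k₂ → ℝ)) →ₗ[ℝ] ((Fin k₁ → ℝ) × (Fin k₂ → ℝ))) =
        Matrix.fromBlocks 1 0
          (Matrix.of fun j i => (L ((Pi.basisFun ℝ (Fin k₁)) i, 0)).2 j)
          (Matrix.diagonal fun j => Real.exp (s a j)) := by
      ext i' i
      rcases i' with i' | j' <;> rcases i with i | j <;>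
        rw [LinearMap.toMatrix_apply]
      · -- top-left block: identity
        simp only [hB, Module.Basis.prod_apply_inl_fst (b := Pi.basisFun ℝ (Fin k₁)),
          Module.Basis.prod_repr_inl]
        simp only [Module.Basis.prod_apply, Sum.elim_inl, Function.comp_apply]
        simp [L, Matrix.one_apply, Pi.basisFun_apply, Pi.single_apply, eq_comm]
      · -- top-right block: zero
        simp only [hB, Module.Basis.prod_repr_inl, Module.Basis.prod_apply, Sum.elim_inr, Function.comp_apply]
        simp [L]
      · -- bottom-left block
        simp only [hB, Module.Basis.prod_repr_inr, Module.Basis.prod_apply, Sum.elim_inl, Function.comp_apply]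
        simp [Matrix.fromBlocks]
      · -- bottom-right block: diagonal
        simp only [hB, Module.Basis.prod_repr_inr, Module.Basis.prod_apply, Sum.elim_inr, Function.comp_apply]
        simp only [LinearMap.inr_apply, Matrix.fromBlocks_apply₂₂]
        simp [L, c, Pi.basisFun_apply, Pi.single_apply, Matrix.diagonal_apply]
    rw [hmat, Matrix.det_fromBlocks_zero₁₂, Matrix.det_one, one_mul, Matrix.det_diagonal,
      ← Real.exp_sum]
  refine ⟨hdiff, hdet, ?_, ?_⟩
  · rw [hdet]; exact Real.exp_pos _
  · rw [hdet, abs_of_pos (Real.exp_pos _), Real.log_exp]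
end

section
/- Let m₀ ∈ ℝ, σ > 0, and β ∈ [0,1]. Let X and η be independent real random variables with X ~ N(m₀, σ²) and η ~ N(0, σ²), and set Y = √(1 − β²) · (X − m₀) + m₀ + β · η. Then the joint law of the pair (X, Y) is exchangeable: the distribution of (X, Y) on ℝ² equals the distribution of (Y, X). In particular the pCN proposal kernel is reversible with respect to the Gaussian prior N(m₀, σ²). -/
open MeasureTheory ProbabilityTheory Real
open scoped ENNReal NNReal


-- map of withDensity under a measurable equiv
lemma aux_map_withDensity {α β : Type*} [MeasurableSpace α] [MeasurableSpace β]
    (e : α ≃ᵐ β) (μ : Measure α) {f : α → ℝ≥0∞} (hf : Measurable f) :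
    (μ.withDensity f).map e = (μ.map e).withDensity (f ∘ e.symm) := by
  ext s hs
  rw [Measure.map_apply e.measurable hs,
    withDensity_apply _ (e.measurable hs),
    withDensity_apply _ hs,
    setLIntegral_map hs (hf.comp e.symm.measurable) e.measurable]
  simp [Function.comp]

-- product of withDensity measures
lemma aux_prod_withDensity {f g : ℝ → ℝ≥0∞} (hf : Measurable f) (hg : Measurable g)
    (hfin : IsFiniteMeasure ((volume : Measure ℝ).withDensity f))
    (hgin : IsFiniteMeasure ((volume : Measure ℝ).withDensity g)) :
    ((volume : Measure ℝ).withDensity f).prod (volume.withDensity g)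
      = ((volume : Measure ℝ).prod volume).withDensity (fun p => f p.1 * g p.2) := by
  refine Measure.prod_eq fun s t hs ht => ?_
  rw [withDensity_apply _ (hs.prod ht), ← Measure.prod_restrict,
    withDensity_apply _ hs, withDensity_apply _ ht]
  rw [lintegral_prod_mul (hf.aemeasurable) (hg.aemeasurable)]

section rot
variable (a b : ℝ)

/-- The reflection/rotation `(u,w) ↦ (a u + b w, b u − a w)` as a linear map. -/
noncomputable def rotL : (ℝ × ℝ) →ₗ[ℝ] (ℝ × ℝ) :=
  Matrix.toLin (Module.Basis.finTwoProd ℝ) (Module.Basis.finTwoProd ℝ) !![a, b; b, -a]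

lemma rotL_apply (p : ℝ × ℝ) : rotL a b p = (a * p.1 + b * p.2, b * p.1 - a * p.2) := by
  simp only [rotL, Matrix.toLin_finTwoProd_apply, neg_mul, ← sub_eq_add_neg]

lemma rotL_det : LinearMap.det (rotL a b) = -(a ^ 2) - b ^ 2 := by
  rw [rotL, LinearMap.det_toLin, Matrix.det_fin_two_of]
  ring

lemma rot_involutive (hab : a ^ 2 + b ^ 2 = 1) :
    Function.Involutive (fun p : ℝ × ℝ => (a * p.1 + b * p.2, b * p.1 - a * p.2)) := by
  intro p
  have h1 : a * (a * p.1 + b * p.2) + b * (b * p.1 - a * p.2) = (a^2 + b^2) * p.1 := by ring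
  have h2 : b * (a * p.1 + b * p.2) - a * (b * p.1 - a * p.2) = (a^2 + b^2) * p.2 := by ring
  simp [h1, h2, hab]

/-- `rot` as a measurable equiv (it is an involution). -/
noncomputable def rotE (hab : a ^ 2 + b ^ 2 = 1) : (ℝ × ℝ) ≃ᵐ (ℝ × ℝ) where
  toFun p := (a * p.1 + b * p.2, b * p.1 - a * p.2)
  invFun p := (a * p.1 + b * p.2, b * p.1 - a * p.2)
  left_inv := rot_involutive a b hab
  right_inv := rot_involutive a b hab
  measurable_toFun := by
    show Measurable fun p : ℝ × ℝ => (a * p.1 + b * p.2, b * p.1 - a * p.2); fun_prop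
  measurable_invFun := by
    show Measurable fun p : ℝ × ℝ => (a * p.1 + b * p.2, b * p.1 - a * p.2); fun_prop

lemma volume_map_rot (hab : a ^ 2 + b ^ 2 = 1) :
    (volume : Measure (ℝ × ℝ)).map (fun p : ℝ × ℝ => (a * p.1 + b * p.2, b * p.1 - a * p.2))
      = volume := by
  have hdet : LinearMap.det (rotL a b) ≠ 0 := by
    rw [rotL_det]; intro h; nlinarith [hab]
  have := Measure.map_linearMap_addHaar_eq_smul_addHaar (volume : Measure (ℝ × ℝ)) hdet
  have heq : ⇑(rotL a b) = fun p : ℝ × ℝ => (a * p.1 + b * p.2, b * p.1 - a * p.2) :=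
    funext (rotL_apply a b)
  rw [heq] at this
  rw [this, rotL_det]
  have : |(-(a ^ 2) - b ^ 2)⁻¹| = 1 := by
    rw [abs_inv]
    have : -(a ^ 2) - b ^ 2 = -1 := by linarith
    simp [this]
  rw [this]
  simp
end rot

lemma gaussPDF_rot (v : ℝ≥0) (a b : ℝ) (hab : a ^ 2 + b ^ 2 = 1) (u w : ℝ) :
    gaussianPDF 0 v (a * u + b * w) * gaussianPDF 0 v (b * u - a * w)
      = gaussianPDF 0 v u * gaussianPDF 0 v w := by
  simp only [gaussianPDF_def]
  rw [← ENNReal.ofReal_mul (gaussianPDFReal_nonneg _ _ _),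
    ← ENNReal.ofReal_mul (gaussianPDFReal_nonneg _ _ _)]
  congr 1
  simp only [gaussianPDFReal_def, sub_zero]
  have h : (a * u + b * w) ^ 2 + (b * u - a * w) ^ 2 = u ^ 2 + w ^ 2 := by
    have : (a * u + b * w) ^ 2 + (b * u - a * w) ^ 2 = (a^2+b^2) * (u ^ 2 + w ^ 2) := by ring
    rw [this, hab, one_mul]
  set c : ℝ := (Real.sqrt (2 * π * (v : ℝ)))⁻¹ with hc
  have e1 : (-(a*u+b*w)^2/(2*(v:ℝ))) + (-(b*u-a*w)^2/(2*(v:ℝ)))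
      = (-u^2/(2*(v:ℝ))) + (-w^2/(2*(v:ℝ))) := by
    rw [← add_div, ← add_div]
    congr 1
    linarith [h]
  calc (c * rexp (-(a*u+b*w)^2/(2*(v:ℝ)))) * (c * rexp (-(b*u-a*w)^2/(2*(v:ℝ))))
      = c^2 * rexp ((-(a*u+b*w)^2/(2*(v:ℝ))) + (-(b*u-a*w)^2/(2*(v:ℝ)))) := by
        rw [Real.exp_add]; ring
    _ = c^2 * rexp ((-u^2/(2*(v:ℝ))) + (-w^2/(2*(v:ℝ)))) := by rw [e1]
    _ = (c * rexp (-u^2/(2*(v:ℝ)))) * (c * rexp (-w^2/(2*(v:ℝ)))) := by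
        rw [Real.exp_add]; ring

/-- Rotation invariance of the centred 2d product Gaussian. -/
lemma gauss_prod_rot_invariant {v : ℝ≥0} (hv : v ≠ 0) (a b : ℝ) (hab : a ^ 2 + b ^ 2 = 1) :
    ((gaussianReal 0 v).prod (gaussianReal 0 v)).map
        (fun p : ℝ × ℝ => (a * p.1 + b * p.2, b * p.1 - a * p.2))
      = (gaussianReal 0 v).prod (gaussianReal 0 v) := by
  have hpdf : Measurable (gaussianPDF 0 v) := measurable_gaussianPDF 0 v
  have hfin : IsFiniteMeasure ((volume : Measure ℝ).withDensity (gaussianPDF 0 v)) := by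
    rw [← gaussianReal_of_var_ne_zero 0 hv]; infer_instance
  have hprod : (gaussianReal 0 v).prod (gaussianReal 0 v)
      = (volume : Measure (ℝ × ℝ)).withDensity
          (fun p => gaussianPDF 0 v p.1 * gaussianPDF 0 v p.2) := by
    rw [gaussianReal_of_var_ne_zero 0 hv, aux_prod_withDensity hpdf hpdf hfin hfin,
      ← Measure.volume_eq_prod]
  rw [hprod]
  have hmeas : Measurable (fun p : ℝ × ℝ => gaussianPDF 0 v p.1 * gaussianPDF 0 v p.2) := by
    fun_prop
  have := aux_map_withDensity (rotE a b hab) (volume : Measure (ℝ × ℝ)) hmeas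
  have hco : ⇑(rotE a b hab) = fun p : ℝ × ℝ => (a * p.1 + b * p.2, b * p.1 - a * p.2) := rfl
  have hsymm : ⇑(rotE a b hab).symm = fun p : ℝ × ℝ => (a * p.1 + b * p.2, b * p.1 - a * p.2) := rfl
  rw [hco] at this
  rw [this, volume_map_rot a b hab]
  congr 1
  funext p
  rw [Function.comp_apply, hsymm]
  exact gaussPDF_rot v a b hab p.1 p.2



/-- The joint law of the current state `X ~ N(m₀, σ²)` and the pCN proposal
`Y = √(1 − β²)(X − m₀) + m₀ + β η` (with `η ~ N(0, σ²)` independent of `X`) is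
exchangeable: `(X, Y)` and `(Y, X)` have the same distribution on ℝ²; i.e. the
pCN proposal kernel is reversible with respect to the Gaussian prior. -/
theorem pcn_reversible_gaussian_prior {Ω : Type*} [MeasurableSpace Ω]
    (P : Measure Ω) [IsProbabilityMeasure P]
    (m₀ σ β : ℝ) (hσ : 0 < σ) (hβ0 : 0 ≤ β) (hβ1 : β ≤ 1)
    (X η : Ω → ℝ) (hX : Measurable X) (hη : Measurable η)
    (hindep : IndepFun X η P)
    (hXlaw : Measure.map X P = gaussianReal m₀ ((σ ^ 2).toNNReal))
    (hηlaw : Measure.map η P = gaussianReal 0 ((σ ^ 2).toNNReal))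
    (Y : Ω → ℝ)
    (hY : ∀ ω, Y ω = Real.sqrt (1 - β ^ 2) * (X ω - m₀) + m₀ + β * η ω) :
    Measure.map (fun ω => (X ω, Y ω)) P = Measure.map (fun ω => (Y ω, X ω)) P := by

  set v : ℝ≥0 := (σ ^ 2).toNNReal with hv_def
  have hv : v ≠ 0 := by
    simp [hv_def, Real.toNNReal_eq_zero, not_le]
    positivity
  set a : ℝ := Real.sqrt (1 - β ^ 2) with ha_def
  have h1β : 0 ≤ 1 - β ^ 2 := by nlinarith
  have hab : a ^ 2 + β ^ 2 = 1 := by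
    rw [ha_def, Real.sq_sqrt h1β]; ring
  -- the four building-block maps
  set T : ℝ × ℝ → ℝ × ℝ := fun p => (p.1 - m₀, p.2) with hT_def
  set G : ℝ × ℝ → ℝ × ℝ := fun p => (p.1, a * p.1 + β * p.2) with hG_def
  set S : ℝ × ℝ → ℝ × ℝ := fun p => (p.1 + m₀, p.2 + m₀) with hS_def
  set R : ℝ × ℝ → ℝ × ℝ := fun p => (a * p.1 + β * p.2, β * p.1 - a * p.2) with hR_def
  have hT : Measurable T := by fun_prop
  have hG : Measurable G := by fun_prop
  have hS : Measurable S := by fun_prop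
  have hR : Measurable R := by fun_prop
  have hmpair : Measurable (fun ω => (X ω, η ω)) := hX.prodMk hη
  -- joint law of (X, η)
  have hpair : Measure.map (fun ω => (X ω, η ω)) P
      = (gaussianReal m₀ v).prod (gaussianReal 0 v) := by
    rw [(indepFun_iff_map_prod_eq_prod_map_map hX.aemeasurable hη.aemeasurable).mp hindep,
      hXlaw, hηlaw]
  -- centering: map of the joint law under T
  have hmapT : ((gaussianReal m₀ v).prod (gaussianReal 0 v)).map T
      = (gaussianReal 0 v).prod (gaussianReal 0 v) := by
    have hTeq : T = Prod.map (fun x : ℝ => x + (-m₀)) (id : ℝ → ℝ) := by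
      funext p; simp [hT_def, sub_eq_add_neg, Prod.map]
    rw [hTeq, ← Measure.map_prod_map _ _ (by fun_prop) measurable_id, Measure.map_id,
      gaussianReal_map_add_const (-m₀), add_neg_cancel]
  -- expressing the two pair maps as compositions
  have h1 : (fun ω => (X ω, Y ω)) = (S ∘ (G ∘ T)) ∘ (fun ω => (X ω, η ω)) := by
    funext ω
    simp only [Function.comp_apply, hT_def, hG_def, hS_def, hY ω]
    exact Prod.ext (by ring) (by ring)
  have h2 : (fun ω => (Y ω, X ω)) = (S ∘ (G ∘ (R ∘ T))) ∘ (fun ω => (X ω, η ω)) := by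
    funext ω
    simp only [Function.comp_apply, hT_def, hG_def, hS_def, hR_def, hY ω]
    refine Prod.ext (by ring) ?_
    show X ω = a * (a * (X ω - m₀) + β * η ω) + β * (β * (X ω - m₀) - a * η ω) + m₀
    have : a * (a * (X ω - m₀) + β * η ω) + β * (β * (X ω - m₀) - a * η ω) + m₀
        = (a ^ 2 + β ^ 2) * (X ω - m₀) + m₀ := by ring
    rw [this, hab]; ring
  rw [h1, h2,
    ← Measure.map_map (hS.comp (hG.comp hT)) hmpair,
    ← Measure.map_map (hS.comp (hG.comp (hR.comp hT))) hmpair, hpair,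
    ← Measure.map_map hS (hG.comp hT), ← Measure.map_map hG hT,
    ← Measure.map_map hS (hG.comp (hR.comp hT)), ← Measure.map_map hG (hR.comp hT),
    ← Measure.map_map hR hT, hmapT,
    gauss_prod_rot_invariant hv a β hab]
end
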